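/- The function x̂ satisfies |x̂(t + h) − x̂(t)| ≤ ω(h) for all h ∈ (0,1) and t ∈ [0, 1 − h], where ω(h) = (1 + 1/√2)·h·2^{ν(h)/2} + (1/3)(2√2 + 2)·2^{−ν(h)/2} and ν(h) = ⌊−log₂ h⌋. -/

import Mathlib

set_option maxHeartbeats 1000000

noncomputable def e00 (t : ℝ) : ℝ := max (min t (1 - t)) 0

noncomputable def e (m : ℕ) (k : ℤ) (t : ℝ) : ℝ :=
  (2 : ℝ) ^ (-(m : ℝ) / 2) * e00 ((2 : ℝ) ^ m * t - k)

noncomputable def xhat (t : ℝ) : ℝ :=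
  ∑' m : ℕ, ∑ k ∈ Finset.range (2 ^ m), e m k t

noncomputable def ν (h : ℝ) : ℤ := ⌊-Real.logb 2 h⌋

noncomputable def ω (h : ℝ) : ℝ :=
  (1 + 1 / Real.sqrt 2) * h * (2 : ℝ) ^ ((ν h : ℝ) / 2)
    + (1 / 3) * (2 * Real.sqrt 2 + 2) * (2 : ℝ) ^ (-(ν h : ℝ) / 2)

noncomputable def ph (x : ℝ) : ℝ := |x - round x|

noncomputable def rr : ℝ := (Real.sqrt 2)⁻¹

noncomputable def Ph (x : ℝ) : ℝ := ∑' m : ℕ, rr ^ m * ph ((2:ℝ) ^ m * x)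

lemma sqrt2_pos : (0:ℝ) < Real.sqrt 2 := Real.sqrt_pos.mpr two_pos
lemma sqrt2_sq : Real.sqrt 2 * Real.sqrt 2 = 2 := Real.mul_self_sqrt two_pos.le
lemma sqrt2_lt : Real.sqrt 2 < 1.42 := by
  nlinarith [sqrt2_sq, sqrt2_pos]
lemma sqrt2_gt : (1.41:ℝ) < Real.sqrt 2 := by
  nlinarith [sqrt2_sq, sqrt2_pos]

lemma rr_eq : rr = Real.sqrt 2 / 2 := by
  rw [rr, eq_div_iff (two_ne_zero), inv_mul_eq_div, div_eq_iff (ne_of_gt sqrt2_pos)]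
  exact sqrt2_sq.symm

lemma rr_pos : 0 < rr := by rw [rr_eq]; positivity
lemma rr_lt_one : rr < 1 := by rw [rr_eq]; nlinarith [sqrt2_lt]
lemma rr_mul_sqrt2 : rr * Real.sqrt 2 = 1 := by
  rw [rr]; field_simp
lemma rr_sq : rr * rr = 1/2 := by
  rw [rr_eq]; rw [div_mul_div_comm, sqrt2_sq]; norm_num
lemma rr_le : rr ≤ 3/4 := by rw [rr_eq]; nlinarith [sqrt2_lt]

lemma ph_nonneg (x : ℝ) : 0 ≤ ph x := abs_nonneg _
lemma ph_le_half (x : ℝ) : ph x ≤ 1/2 := abs_sub_round x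
lemma ph_le (x : ℝ) (n : ℤ) : ph x ≤ |x - n| := round_le x n
lemma ph_le_abs (x : ℝ) : ph x ≤ |x| := by simpa using ph_le x 0
lemma ph_add_int (x : ℝ) (n : ℤ) : ph (x + n) = ph x := by
  unfold ph
  rw [round_add_intCast]
  push_cast
  ring_nf
lemma ph_neg (x : ℝ) : ph (-x) = ph x := by
  apply le_antisymm
  · calc ph (-x) ≤ |(-x) - (-(round x : ℤ) : ℤ)| := ph_le _ _
      _ = |x - round x| := by push_cast; rw [← abs_neg]; ring_nf
      _ = ph x := rfl
  · calc ph x ≤ |x - (-(round (-x) : ℤ) : ℤ)| := ph_le _ _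
      _ = |(-x) - round (-x)| := by push_cast; rw [← abs_neg]; ring_nf
      _ = ph (-x) := rfl
lemma ph_triangle (a b : ℝ) : ph a ≤ ph b + ph (a - b) := by
  calc ph a ≤ |a - ((round b + round (a-b) : ℤ) : ℝ)| := ph_le _ _
    _ = |(b - round b) + ((a - b) - round (a-b))| := by push_cast; ring_nf
    _ ≤ |b - round b| + |(a-b) - round (a-b)| := abs_add_le _ _
    _ = ph b + ph (a - b) := rfl
lemma ph_diff_le (a b : ℝ) : |ph a - ph b| ≤ ph (a - b) := by
  rw [abs_sub_le_iff]
  constructor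
  · linarith [ph_triangle a b]
  · have := ph_triangle b a
    rw [show b - a = -(a-b) by ring, ph_neg] at this
    linarith
lemma ph_eq_self {x : ℝ} (h0 : 0 ≤ x) (h2 : x ≤ 1/2) : ph x = x := by
  rcases eq_or_lt_of_le h2 with h | h
  · subst h; unfold ph; rw [show (1:ℝ)/2 = 2⁻¹ by norm_num, round_two_inv]; norm_num
  · unfold ph
    rw [round_eq, show x + 1/2 = x + 1/2 by rfl, Int.floor_eq_zero_iff.mpr ⟨by linarith, by linarith⟩]
    simp [abs_of_nonneg h0]
lemma ph_eq_min {x : ℝ} (h0 : 0 ≤ x) (h1 : x < 1) : ph x = min x (1 - x) := by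
  unfold ph
  rw [abs_sub_round_eq_min, Int.fract_eq_self.mpr ⟨h0, h1⟩]

lemma e00_eq_ph {x : ℝ} (h0 : 0 ≤ x) (h1 : x ≤ 1) : e00 x = ph x := by
  rcases eq_or_lt_of_le h1 with h | h
  · subst h
    unfold e00
    rw [show ph 1 = ph (0 + (1:ℤ)) by norm_num, ph_add_int]
    unfold ph
    norm_num
  · rw [ph_eq_min h0 h, e00, max_eq_left]
    exact le_min h0 (by linarith)

lemma e00_of_nonpos {x : ℝ} (h : x ≤ 0) : e00 x = 0 := by
  unfold e00
  rw [max_eq_right]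
  exact min_le_of_left_le h
lemma e00_of_one_le {x : ℝ} (h : 1 ≤ x) : e00 x = 0 := by
  unfold e00
  rw [max_eq_right]
  exact min_le_of_right_le (by linarith)

lemma sum_e00 {N : ℕ} (hN : 1 ≤ N) {s : ℝ} (h0 : 0 ≤ s) (h1 : s ≤ N) :
    ∑ k ∈ Finset.range N, e00 (s - k) = ph s := by
  set k0 : ℕ := min ⌊s⌋.toNat (N - 1) with hk0
  have hfl : ((⌊s⌋.toNat : ℕ) : ℝ) ≤ s := by
    have h2 : ((⌊s⌋.toNat : ℤ) : ℝ) ≤ s := by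
      rw [Int.toNat_of_nonneg (Int.floor_nonneg.mpr h0)]
      exact Int.floor_le s
    exact_mod_cast h2
  have hflub : s < ((⌊s⌋.toNat : ℕ) : ℝ) + 1 := by
    have h2 : s < ((⌊s⌋.toNat : ℤ) : ℝ) + 1 := by
      rw [Int.toNat_of_nonneg (Int.floor_nonneg.mpr h0)]
      exact Int.lt_floor_add_one s
    exact_mod_cast h2
  have hk0le : (k0 : ℝ) ≤ s :=
    le_trans (by exact_mod_cast Nat.cast_le.mpr (min_le_left _ _)) hfl
  have hsk1 : s ≤ (k0 : ℝ) + 1 := by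
    rcases le_or_gt (⌊s⌋.toNat) (N-1) with hc | hc
    · have hk0eq : k0 = ⌊s⌋.toNat := by omega
      rw [hk0eq]
      linarith
    · have hk0eq : k0 = N - 1 := by omega
      have hcast : ((N - 1 : ℕ) : ℝ) = (N:ℝ) - 1 := by
        push_cast [Nat.cast_sub hN]
        ring
      rw [hk0eq, hcast]
      linarith
  rw [Finset.sum_eq_single_of_mem k0]
  · have h0' : 0 ≤ s - k0 := by linarith
    have h1' : s - k0 ≤ 1 := by linarith
    rw [e00_eq_ph h0' h1',
      show s - (k0:ℝ) = s + ((-(k0:ℤ) : ℤ) : ℝ) by push_cast; ring, ph_add_int]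
  · rw [Finset.mem_range]; omega
  · intro k hk hne
    rw [Finset.mem_range] at hk
    rcases lt_or_gt_of_ne hne with hlt | hgt
    · apply e00_of_one_le
      have : (k:ℝ) + 1 ≤ k0 := by exact_mod_cast Nat.succ_le_of_lt hlt
      linarith
    · apply e00_of_nonpos
      rcases le_or_gt (⌊s⌋.toNat) (N-1) with hc | hc
      · have hk0eq : k0 = ⌊s⌋.toNat := by omega
        have hkge : ((k0:ℕ) : ℝ) + 1 ≤ (k:ℝ) := by exact_mod_cast Nat.succ_le_of_lt hgt
        rw [hk0eq] at hkge
        linarith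
      · exact absurd hk (by omega)

lemma coeff_eq (m : ℕ) : (2 : ℝ) ^ (-(m : ℝ) / 2) = rr ^ m := by
  rw [rr, inv_pow, show -(m:ℝ)/2 = -((m:ℝ)/2) by ring, Real.rpow_neg two_pos.le]
  congr 1
  rw [show (m:ℝ)/2 = (1/2) * m by ring, Real.rpow_mul two_pos.le, Real.rpow_natCast,
    ← Real.sqrt_eq_rpow]

lemma summable_ph (x : ℝ) : Summable (fun m : ℕ => rr ^ m * ph ((2:ℝ) ^ m * x)) := by
  apply Summable.of_nonneg_of_le
    (fun m => mul_nonneg (pow_nonneg rr_pos.le m) (ph_nonneg _))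
    (fun m => mul_le_mul_of_nonneg_left (ph_le_half _) (pow_nonneg rr_pos.le m))
    ((summable_geometric_of_lt_one rr_pos.le rr_lt_one).mul_right (1/2))

lemma Ph_nonneg (x : ℝ) : 0 ≤ Ph x := tsum_nonneg (fun m => mul_nonneg (pow_nonneg rr_pos.le m) (ph_nonneg _))

lemma Ph_le_two (x : ℝ) : Ph x ≤ 2 := by
  have h1 : Ph x ≤ ∑' m : ℕ, rr ^ m * (1/2) := by
    apply Summable.tsum_le_tsum
      (fun m => mul_le_mul_of_nonneg_left (ph_le_half _) (pow_nonneg rr_pos.le m))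
      (summable_ph x) ((summable_geometric_of_lt_one rr_pos.le rr_lt_one).mul_right _)
  rw [tsum_mul_right, tsum_geometric_of_lt_one rr_pos.le rr_lt_one] at h1
  have h2 : (1 - rr)⁻¹ ≤ 4 := by
    rw [inv_le_comm₀ (by linarith [rr_le]) (by norm_num)]
    linarith [rr_le]
  calc Ph x ≤ (1-rr)⁻¹ * (1/2) := h1
    _ ≤ 4 * (1/2) := by linarith [mul_le_mul_of_nonneg_right h2 (by norm_num : (0:ℝ) ≤ 1/2)]
    _ = 2 := by norm_num

lemma Ph_rec (x : ℝ) : Ph x = ph x + rr * Ph (2 * x) := by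
  rw [Ph, Summable.tsum_eq_zero_add (summable_ph x)]
  simp only [pow_zero, pow_succ, one_mul]
  congr 1
  rw [Ph, ← tsum_mul_left]
  apply tsum_congr
  intro m
  rw [show (2:ℝ)^m * 2 * x = (2:ℝ)^m * (2*x) by ring]
  ring

lemma Ph_one_sub (x : ℝ) : Ph (1 - x) = Ph x := by
  apply tsum_congr
  intro m
  congr 1
  rw [show (2:ℝ)^m * (1-x) = -((2:ℝ)^m * x) + ((2^m : ℤ) : ℝ) by push_cast; ring,
    ph_add_int, ph_neg]

lemma key_aux : ∀ k : ℕ, ∀ u : ℝ, 0 ≤ u → u ≤ 1/2 →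
    Ph u ≤ (Real.sqrt 2 + 4)/6 + (Real.sqrt 2/2) * u + rr ^ k * 2 := by
  intro k
  induction k with
  | zero =>
    intro u h0 h2
    have h := Ph_le_two u
    have := sqrt2_gt
    have hs0 : 0 ≤ Real.sqrt 2 := by linarith
    have : 0 ≤ Real.sqrt 2 / 2 * u := by positivity
    simp only [pow_zero]
    nlinarith
  | succ k IH =>
    intro u h0 h2
    have hs2 := sqrt2_sq
    have hslt := sqrt2_lt
    have hsgt := sqrt2_gt
    have hX0 : (0:ℝ) ≤ (Real.sqrt 2/2) ^ k := by positivity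
    have hpow : rr ^ (k+1) = rr ^ k * rr := pow_succ rr k
    have hA2 : (Real.sqrt 2/2)*((Real.sqrt 2+4)/6) = (1 + 2*Real.sqrt 2)/6 := by
      linear_combination (1/12) * hs2
    have h1 : Ph u = u + rr * Ph (2 * u) := by
      have := Ph_rec u
      rwa [ph_eq_self h0 h2] at this
    rcases le_or_gt u (3/16) with hA | hA
    · -- case (a)
      have hIH := IH (2*u) (by linarith) (by linarith)
      have hc := mul_le_mul_of_nonneg_left hIH rr_pos.le
      rw [rr_eq] at hc h1 hpow ⊢
      have hval : Real.sqrt 2/2 * ((Real.sqrt 2 + 4)/6 + Real.sqrt 2/2 * (2*u) + (Real.sqrt 2/2) ^ k * 2)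
          = (1 + 2*Real.sqrt 2)/6 + u + Real.sqrt 2 * (Real.sqrt 2/2) ^ k := by
        linear_combination (u/2 + 1/12) * hs2
      rw [hval] at hc
      nlinarith [mul_nonneg (by linarith : (0:ℝ) ≤ 3/16 - u)
        (by linarith : (0:ℝ) ≤ 24 - 6 * Real.sqrt 2)]
    · rcases le_or_gt u (1/4) with hB | hB
      · -- case (b)
        have h2' : Ph (2*u) = 2*u + rr * Ph (4*u) := by
          have := Ph_rec (2*u)
          rwa [ph_eq_self (by linarith) (by linarith),
            show 2*(2*u) = 4*u by ring] at this
        have h3 : Ph (4*u) = Ph (1 - 4*u) := (Ph_one_sub (4*u)).symm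
        have hIH := IH (1 - 4*u) (by linarith) (by linarith)
        have hc2 : Ph (2*u) ≤ 2*u + rr * (((Real.sqrt 2 + 4)/6 + (Real.sqrt 2/2) * (1-4*u) + rr ^ k * 2)) := by
          have := mul_le_mul_of_nonneg_left hIH rr_pos.le
          rw [h2', h3]; linarith
        have hc1 := mul_le_mul_of_nonneg_left hc2 rr_pos.le
        rw [rr_eq] at hc1 h1 hpow ⊢
        have hval : Real.sqrt 2/2 * (2*u + Real.sqrt 2/2 * ((Real.sqrt 2 + 4)/6 + Real.sqrt 2/2 * (1-4*u) + (Real.sqrt 2/2) ^ k * 2))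
            = Real.sqrt 2 * u + (Real.sqrt 2+4)/12 + (Real.sqrt 2/4)*(1-4*u) + (Real.sqrt 2/2) ^ k := by
          linear_combination ((Real.sqrt 2+4)/24 + (Real.sqrt 2/2)^k/2 + Real.sqrt 2*(1-4*u)/8) * hs2
        rw [hval] at hc1
        nlinarith [mul_nonneg (by linarith : (0:ℝ) ≤ 2 - Real.sqrt 2)
          (by linarith : (0:ℝ) ≤ 1/3 - u),
          mul_nonneg hX0 (by linarith : (0:ℝ) ≤ Real.sqrt 2 - 1)]
      · rcases le_or_gt u (1/3) with hC | hC
        · -- case (c)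
          have h2' : Ph (2*u) = Ph (1 - 2*u) := (Ph_one_sub (2*u)).symm
          have h3 : Ph (1-2*u) = (1-2*u) + rr * Ph (2 - 4*u) := by
            have := Ph_rec (1-2*u)
            rwa [ph_eq_self (by linarith) (by linarith),
              show 2*(1-2*u) = 2 - 4*u by ring] at this
          have h4 : Ph (2 - 4*u) = Ph (4*u - 1) := by
            rw [show (2:ℝ) - 4*u = 1 - (4*u - 1) by ring, Ph_one_sub]
          have hIH := IH (4*u - 1) (by linarith) (by linarith)
          have hc2 : Ph (2*u) ≤ (1-2*u) + rr * (((Real.sqrt 2 + 4)/6 + (Real.sqrt 2/2) * (4*u-1) + rr ^ k * 2)) := by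
            have := mul_le_mul_of_nonneg_left hIH rr_pos.le
            rw [h2', h3, h4]; linarith
          have hc1 := mul_le_mul_of_nonneg_left hc2 rr_pos.le
          rw [rr_eq] at hc1 h1 hpow ⊢
          have hval : Real.sqrt 2/2 * ((1-2*u) + Real.sqrt 2/2 * ((Real.sqrt 2 + 4)/6 + Real.sqrt 2/2 * (4*u-1) + (Real.sqrt 2/2) ^ k * 2))
              = (Real.sqrt 2/2) * (1-2*u) + (Real.sqrt 2+4)/12 + (Real.sqrt 2/4)*(4*u-1) + (Real.sqrt 2/2) ^ k := by
            linear_combination ((Real.sqrt 2+4)/24 + (Real.sqrt 2/2)^k/2 + Real.sqrt 2*(4*u-1)/8) * hs2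
          rw [hval] at hc1
          nlinarith [mul_nonneg (by linarith : (0:ℝ) ≤ 2 - Real.sqrt 2)
            (by linarith : (0:ℝ) ≤ 1/3 - u),
            mul_nonneg hX0 (by linarith : (0:ℝ) ≤ Real.sqrt 2 - 1)]
        · -- case (d)
          have h2' : Ph (2*u) = Ph (1 - 2*u) := (Ph_one_sub (2*u)).symm
          have hIH := IH (1 - 2*u) (by linarith) (by linarith)
          have hc2 : Ph (2*u) ≤ (Real.sqrt 2 + 4)/6 + (Real.sqrt 2/2) * (1-2*u) + rr ^ k * 2 := by
            rw [h2']; linarith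
          have hc1 := mul_le_mul_of_nonneg_left hc2 rr_pos.le
          rw [rr_eq] at hc1 h1 hpow ⊢
          have hval : Real.sqrt 2/2 * ((Real.sqrt 2 + 4)/6 + Real.sqrt 2/2 * (1-2*u) + (Real.sqrt 2/2) ^ k * 2)
              = (1 + 2*Real.sqrt 2)/6 + (1-2*u)/2 + Real.sqrt 2 * (Real.sqrt 2/2) ^ k := by
            linear_combination (1/12 + (1-2*u)/4) * hs2
          rw [hval] at hc1
          nlinarith [mul_nonneg (by linarith : (0:ℝ) ≤ Real.sqrt 2)
            (by linarith : (0:ℝ) ≤ u - 1/3)]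

lemma key {u : ℝ} (h0 : 0 ≤ u) (h2 : u ≤ 1/2) :
    Ph u ≤ (Real.sqrt 2 + 4)/6 + (Real.sqrt 2/2) * u := by
  apply le_of_forall_pos_le_add
  intro ε hε
  obtain ⟨k, hk⟩ := exists_pow_lt_of_lt_one (by linarith : (0:ℝ) < ε/2) rr_lt_one
  have := key_aux k u h0 h2
  have h2' : rr ^ k * 2 ≤ ε := by nlinarith [pow_nonneg rr_pos.le k]
  linarith

lemma xhat_eq {t : ℝ} (h0 : 0 ≤ t) (h1 : t ≤ 1) : xhat t = Ph t := by
  unfold xhat Ph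
  apply tsum_congr
  intro m
  have hN : 1 ≤ 2^m := Nat.one_le_two_pow
  have hcast : ((2^m : ℕ) : ℝ) = (2:ℝ)^m := by push_cast; ring
  have hs0 : 0 ≤ (2:ℝ)^m * t := by positivity
  have hs1 : (2:ℝ)^m * t ≤ ((2^m : ℕ) : ℝ) := by
    rw [hcast]
    nlinarith [pow_pos (two_pos (α := ℝ)) m]
  calc ∑ k ∈ Finset.range (2^m), e m k t
      = (2 : ℝ) ^ (-(m : ℝ) / 2) * ∑ k ∈ Finset.range (2^m), e00 ((2:ℝ)^m * t - k) := by
        rw [Finset.mul_sum]; rfl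
    _ = rr ^ m * ph ((2:ℝ)^m * t) := by
        rw [sum_e00 hN hs0 hs1, coeff_eq]

lemma diff_le_Ph {t h : ℝ} (ht0 : 0 ≤ t) (ht1 : t + h ≤ 1) (hh : 0 ≤ h) :
    |xhat (t + h) - xhat t| ≤ Ph h := by
  rw [xhat_eq (by linarith) ht1, xhat_eq ht0 (by linarith), Ph, Ph]
  rw [← Summable.tsum_sub (summable_ph (t+h)) (summable_ph t)]
  have hsum : Summable (fun m : ℕ =>
      rr ^ m * ph ((2:ℝ) ^ m * (t+h)) - rr ^ m * ph ((2:ℝ) ^ m * t)) :=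
    (summable_ph (t+h)).sub (summable_ph t)
  have hbd : ∀ m : ℕ, |rr ^ m * ph ((2:ℝ) ^ m * (t+h)) - rr ^ m * ph ((2:ℝ) ^ m * t)|
      ≤ rr ^ m * ph ((2:ℝ) ^ m * h) := by
    intro m
    rw [← mul_sub, abs_mul, abs_of_nonneg (pow_nonneg rr_pos.le m)]
    apply mul_le_mul_of_nonneg_left _ (pow_nonneg rr_pos.le m)
    have := ph_diff_le ((2:ℝ)^m * (t+h)) ((2:ℝ)^m * t)
    rwa [show (2:ℝ)^m * (t+h) - (2:ℝ)^m * t = (2:ℝ)^m * h by ring] at this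
  rw [abs_le]
  constructor
  · have hneg : ∑' m : ℕ, -(rr ^ m * ph ((2:ℝ) ^ m * (t+h)) - rr ^ m * ph ((2:ℝ) ^ m * t))
        ≤ Ph h := by
      apply Summable.tsum_le_tsum _ hsum.neg (summable_ph h)
      intro m
      have := hbd m
      rw [abs_le] at this
      linarith [this.1]
    rw [tsum_neg] at hneg
    linarith
  · apply Summable.tsum_le_tsum _ hsum (summable_ph h)
    intro m
    have := hbd m
    rw [abs_le] at this
    linarith [this.2]

lemma Ph_split (x : ℝ) (N : ℕ) :
    Ph x = (∑ m ∈ Finset.range N, rr^m * ph ((2:ℝ)^m * x)) + rr^N * Ph ((2:ℝ)^N * x) := by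
  rw [Ph, ← Summable.sum_add_tsum_nat_add N (summable_ph x)]
  congr 1
  rw [Ph, ← tsum_mul_left]
  apply tsum_congr
  intro j
  rw [show (2:ℝ)^(j+N) * x = (2:ℝ)^j * ((2:ℝ)^N * x) by rw [pow_add]; ring, pow_add]
  ring

theorem stmt_11 :
    ∀ h ∈ Set.Ioo (0 : ℝ) 1, ∀ t ∈ Set.Icc (0 : ℝ) (1 - h),
      |xhat (t + h) - xhat t| ≤ ω h := by
  rintro h ⟨hh0, hh1⟩ t ⟨ht0, ht1⟩
  have hstep1 : |xhat (t + h) - xhat t| ≤ Ph h :=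
    diff_le_Ph ht0 (by linarith) hh0.le
  refine le_trans hstep1 ?_
  -- now pure analysis : Ph h ≤ ω h
  have hs2 := sqrt2_sq
  have hsgt := sqrt2_gt
  have hslt := sqrt2_lt
  have hlogneg : Real.logb 2 h < 0 := Real.logb_neg (by norm_num) hh0 hh1
  have hν0 : 0 ≤ ν h := by
    unfold ν
    exact Int.floor_nonneg.mpr (by linarith)
  set N : ℕ := (ν h).toNat with hN
  have hνcast : ((ν h : ℤ) : ℝ) = (N : ℝ) := by
    exact_mod_cast congrArg (Int.cast : ℤ → ℝ) (Int.toNat_of_nonneg hν0).symm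
  -- bounds on 2^N * h
  have hfle : ((ν h : ℤ) : ℝ) ≤ -Real.logb 2 h := Int.floor_le _
  have hflt : -Real.logb 2 h < ((ν h : ℤ) : ℝ) + 1 := Int.lt_floor_add_one _
  have hrw : (2:ℝ) ^ (Real.logb 2 h) = h := Real.rpow_logb two_pos (by norm_num) hh0
  have hθ1 : (2:ℝ)^N * h ≤ 1 := by
    have h1 : Real.logb 2 h ≤ -(N:ℝ) := by rw [← hνcast]; linarith
    have h2 : h ≤ (2:ℝ) ^ (-(N:ℝ) : ℝ) := by
      rw [← hrw]
      exact Real.rpow_le_rpow_of_exponent_le (by norm_num) h1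
    rw [Real.rpow_neg (by norm_num), Real.rpow_natCast] at h2
    have hp : (0:ℝ) < 2^N := by positivity
    rw [mul_comm]
    calc h * 2^N ≤ ((2:ℝ)^N)⁻¹ * 2^N := by nlinarith
      _ = 1 := by field_simp
  have hθh : 1/2 ≤ (2:ℝ)^N * h := by
    have h1 : -((N:ℝ)+1) < Real.logb 2 h := by rw [← hνcast]; linarith
    have h2 : (2:ℝ) ^ (-((N:ℝ)+1) : ℝ) ≤ h := by
      rw [← hrw]
      exact Real.rpow_le_rpow_of_exponent_le (by norm_num) h1.le
    have h3 : (2:ℝ) ^ (-((N:ℝ)+1) : ℝ) = ((2:ℝ)^N)⁻¹ * (1/2) := by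
      rw [show -((N:ℝ)+1) = -(N:ℝ) + (-1) by ring, Real.rpow_add two_pos,
        Real.rpow_neg (by norm_num), Real.rpow_natCast, Real.rpow_neg_one]
      norm_num
    rw [h3] at h2
    have hp : (0:ℝ) < 2^N := by positivity
    calc (1:ℝ)/2 = (2^N * ((2:ℝ)^N)⁻¹) * (1/2) := by field_simp
      _ ≤ 2^N * h := by nlinarith
  -- split
  rw [Ph_split h N]
  set w : ℝ := Real.sqrt 2 ^ N with hw
  have hw1 : 1 ≤ w := one_le_pow₀ (by nlinarith : (1:ℝ) ≤ Real.sqrt 2)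
  have hwpos : 0 < w := by linarith
  have hww : w * w = (2:ℝ)^N := by rw [hw, ← mul_pow, sqrt2_sq]
  have hrrN : rr ^ N = w⁻¹ := by rw [rr, hw, inv_pow]
  -- first sum
  have hfirst : (∑ m ∈ Finset.range N, rr^m * ph ((2:ℝ)^m * h))
      ≤ (Real.sqrt 2 + 1) * (w - 1) * h := by
    have hterm : ∀ m ∈ Finset.range N, rr^m * ph ((2:ℝ)^m * h) = (Real.sqrt 2)^m * h := by
      intro m hm
      rw [Finset.mem_range] at hm
      have hm1 : m + 1 ≤ N := hm
      have hple : (2:ℝ)^(m+1) ≤ (2:ℝ)^N := pow_le_pow_right₀ (by norm_num) hm1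
      have hple2 : (2:ℝ)^m * h ≤ 1/2 := by
        have : (2:ℝ)^(m+1) * h ≤ (2:ℝ)^N * h := by nlinarith [pow_pos (two_pos (α:=ℝ)) (m+1)]
        rw [pow_succ] at this
        nlinarith
      rw [ph_eq_self (by positivity) hple2]
      have h2rr : rr * 2 = Real.sqrt 2 := by rw [rr_eq]; field_simp
      calc rr^m * ((2:ℝ)^m * h) = (rr*2)^m * h := by rw [mul_pow]; ring
        _ = (Real.sqrt 2)^m * h := by rw [h2rr]
    rw [Finset.sum_congr rfl hterm, ← Finset.sum_mul,
      geom_sum_eq ((by intro hcontra; nlinarith [hcontra] : Real.sqrt 2 ≠ 1)) N]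
    have hdiv : (w - 1)/(Real.sqrt 2 - 1) = (Real.sqrt 2 + 1) * (w - 1) := by
      rw [div_eq_iff (ne_of_gt (by nlinarith : (0:ℝ) < Real.sqrt 2 - 1))]
      linear_combination (1 - w) * hs2
    rw [← hw, hdiv]
  -- second piece
  have hsecond : rr^N * Ph ((2:ℝ)^N * h)
      ≤ w⁻¹ * ((Real.sqrt 2 + 4)/6 + (Real.sqrt 2/2) * (1 - (2:ℝ)^N * h)) := by
    rw [hrrN]
    apply mul_le_mul_of_nonneg_left _ (by positivity)
    have hsym : Ph ((2:ℝ)^N * h) = Ph (1 - (1 - (2:ℝ)^N * h)) := by norm_num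
    rw [hsym, Ph_one_sub]
    exact key (by linarith) (by linarith)
  -- omega rewriting
  have hpow1 : (2:ℝ) ^ ((ν h : ℝ) / 2) = w := by
    rw [hνcast, show (N:ℝ)/2 = (1/2) * N by ring, Real.rpow_mul (by norm_num),
      Real.rpow_natCast, ← Real.sqrt_eq_rpow, hw]
  have hpow2 : (2:ℝ) ^ (-(ν h : ℝ) / 2) = w⁻¹ := by
    rw [show -(ν h : ℝ)/2 = -((ν h : ℝ)/2) by ring, Real.rpow_neg (by norm_num), hpow1]
  have hhalf : 1 / Real.sqrt 2 = Real.sqrt 2 / 2 := by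
    rw [div_eq_div_iff (by positivity : Real.sqrt 2 ≠ 0) (by norm_num : (2:ℝ) ≠ 0)]
    linarith [hs2]
  rw [ω, hpow1, hpow2, hhalf]
  rw [← hww] at hsecond
  have hsec2 : rr^N * Ph (w * w * h)
      ≤ (1/3) * (2*Real.sqrt 2 + 2) * w⁻¹ - (Real.sqrt 2/2) * (h * w) := by
    refine le_trans hsecond (le_of_eq ?_)
    field_simp
    ring
  have hexp : (Real.sqrt 2 + 1) * (w - 1) * h
      = (Real.sqrt 2 + 1) * (w * h) - (Real.sqrt 2 + 1) * h := by ring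
  rw [← hww]
  nlinarith [hfirst, hsec2, hexp, mul_nonneg hh0.le (by nlinarith : (0:ℝ) ≤ Real.sqrt 2 + 1),
    mul_nonneg hwpos.le hh0.le, hs2]
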